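/- arXiv:1511.03697 — 4 statements merged into one kernel-verified Lean document; each statement's English description precedes it below -/
import Mathlib

section
/- Let R be a commutative ring, R[X] = R[X_1,…,X_n] with augmentation ideal I_0 = (X_1,…,X_n), and let I ⊂ R[X] be an ideal generated by a regular sequence (f_1,…,f_n) of length n with all f_ν ∈ I_0. Then I/(I·I_0) ≅ I ⊗_{R[X]} R is a free R-module of rank n (with basis the classes of f_1,…,f_n), where R = R[X]/I_0 via X_ν ↦ 0. -/
open MvPolynomial


/-- Relations among a regular sequence have all coefficients in the ideal. -/
lemma key_lemma (R : Type*) [CommRing R] (n : ℕ) (f : Fin n → MvPolynomial (Fin n) R)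
    (hreg : ∀ (i : Fin n) (a : MvPolynomial (Fin n) R),
      f i * a ∈ Ideal.span (f '' {j | j < i}) → a ∈ Ideal.span (f '' {j | j < i})) :
    ∀ (k : ℕ) (g : Fin n → MvPolynomial (Fin n) R),
      (∀ ν : Fin n, k ≤ ν.val → g ν = 0) → ∑ ν, g ν * f ν = 0 →
      ∀ ν, g ν ∈ Ideal.span (Set.range f) := by
  intro k
  induction k with
  | zero =>
    intro g hg _ ν
    rw [hg ν (Nat.zero_le _)]
    exact Ideal.zero_mem _
  | succ k ih =>
    intro g hg hsum ν
    by_cases hk : k < n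
    · set i : Fin n := ⟨k, hk⟩
      -- f i * g i lies in the span of earlier f's
      have h1 : f i * g i ∈ Ideal.span (f '' {j | j < i}) := by
        have hs : f i * g i = -∑ μ ∈ Finset.univ.erase i, g μ * f μ := by
          have := Finset.add_sum_erase Finset.univ (fun μ => g μ * f μ) (Finset.mem_univ i)
          rw [hsum] at this
          linear_combination this
        rw [hs]
        refine neg_mem (Ideal.sum_mem _ fun μ hμ => ?_)
        rcases lt_or_ge μ.val k with h | h
        · exact Ideal.mul_mem_left _ _ (Ideal.subset_span ⟨μ, h, rfl⟩)
        · rcases eq_or_lt_of_le h with h' | h'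
          · exact absurd (Fin.ext h'.symm) (Finset.ne_of_mem_erase hμ)
          · rw [hg μ h', zero_mul]
            exact Ideal.zero_mem _
      have h2 : g i ∈ Ideal.span (f '' {j | j < i}) := hreg i (g i) h1
      rw [Ideal.span, Finsupp.mem_span_image_iff_linearCombination] at h2
      obtain ⟨l, hl_supp, hl⟩ := h2
      rw [Finsupp.linearCombination_apply,
        show (l.sum fun i a => a • f i) = ∑ μ, l μ • f μ from
          Finsupp.sum_fintype _ _ fun i => zero_smul _ _] at hl
      simp only [smul_eq_mul] at hl
      have hl0 : ∀ μ : Fin n, k ≤ μ.val → l μ = 0 := by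
        intro μ hμ
        by_contra h
        have := hl_supp (Finsupp.mem_support_iff.mpr h)
        exact absurd this (fun h' => Nat.not_lt.mpr hμ (Fin.lt_def.mp h'))
      set g' : Fin n → MvPolynomial (Fin n) R :=
        fun μ => (if μ = i then 0 else g μ) + l μ * f i with hg'
      have hg'0 : ∀ μ : Fin n, k ≤ μ.val → g' μ = 0 := by
        intro μ hμ
        by_cases h : μ = i
        · simp [hg', h, hl0 i le_rfl]
        · have : k + 1 ≤ μ.val := by
            rcases eq_or_lt_of_le hμ with h' | h'
            · exact absurd (Fin.ext h'.symm) h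
            · exact h'
          simp [hg', h, hg μ this, hl0 μ hμ]
      have hsum' : ∑ μ, g' μ * f μ = 0 := by
        have e1 : ∀ μ, g' μ * f μ
            = (g μ * f μ - (if μ = i then g μ * f μ else 0)) + l μ * f μ * f i := by
          intro μ
          by_cases h : μ = i
          · subst h; simp [hg']
          · simp only [hg', if_neg h]; ring
        rw [Finset.sum_congr rfl (fun μ _ => e1 μ), Finset.sum_add_distrib,
          Finset.sum_sub_distrib, hsum,
          Finset.sum_ite_eq' Finset.univ i (fun μ => g μ * f μ), ← Finset.sum_mul, hl]
        simp
      have hmem := ih g' hg'0 hsum'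
      by_cases h : ν = i
      · subst h
        rw [← hl]
        refine Ideal.sum_mem _ fun μ _ => ?_
        exact Ideal.mul_mem_left _ _ (Ideal.subset_span ⟨μ, rfl⟩)
      · have : g ν = g' ν - l ν * f i := by simp [hg', h]
        rw [this]
        exact sub_mem (hmem ν) (Ideal.mul_mem_left _ _ (Ideal.subset_span ⟨i, rfl⟩))
    · -- k ≥ n: condition already vacuous at level k
      refine ih g (fun μ hμ => ?_) hsum ν
      have := μ.isLt
      omega


/-- Let `R` be a commutative ring, `R[X] = R[X_1,…,X_n]` with augmentation ideal
`I₀ = (X_1,…,X_n)`, and let `I ⊆ R[X]` be an ideal generated by a regular sequence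
`(f_1,…,f_n)` of length `n` with all `f_ν ∈ I₀`. Then `I/(I·I₀) ≅ I ⊗_{R[X]} R` is a free
`R`-module of rank `n` with basis the classes of the `f_ν`: equivalently, the map
`R^n → R[X]/(I·I₀)`, `a ↦ ∑ a_ν f_ν mod I·I₀`, is injective and its image is exactly the
image of `I` in `R[X]/(I·I₀)`. -/
theorem stmt4 (R : Type*) [CommRing R] (n : ℕ) (f : Fin n → MvPolynomial (Fin n) R)
    (hreg : ∀ (i : Fin n) (a : MvPolynomial (Fin n) R),
      f i * a ∈ Ideal.span (f '' {j | j < i}) → a ∈ Ideal.span (f '' {j | j < i}))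
    (hf0 : ∀ ν, f ν ∈ Ideal.span (Set.range (X : Fin n → MvPolynomial (Fin n) R))) :
    Function.Injective (fun a : Fin n → R =>
      Ideal.Quotient.mk
        (Ideal.span (Set.range f) * Ideal.span (Set.range (X : Fin n → MvPolynomial (Fin n) R)))
        (∑ ν, C (a ν) * f ν)) ∧
    Set.range (fun a : Fin n → R =>
      Ideal.Quotient.mk
        (Ideal.span (Set.range f) * Ideal.span (Set.range (X : Fin n → MvPolynomial (Fin n) R)))
        (∑ ν, C (a ν) * f ν)) =
      (Ideal.Quotient.mk
        (Ideal.span (Set.range f) * Ideal.span (Set.range (X : Fin n → MvPolynomial (Fin n) R))))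
        '' (Ideal.span (Set.range f)) := by
  classical
  set I : Ideal (MvPolynomial (Fin n) R) := Ideal.span (Set.range f) with hI
  set I₀ : Ideal (MvPolynomial (Fin n) R) :=
    Ideal.span (Set.range (X : Fin n → MvPolynomial (Fin n) R)) with hI₀
  set ε : MvPolynomial (Fin n) R →ₐ[R] R := aeval (fun _ => (0 : R)) with hε
  have hεI₀ : ∀ x ∈ I₀, ε x = 0 := by
    intro x hx
    have hle : I₀ ≤ RingHom.ker (ε : MvPolynomial (Fin n) R →+* R) := by
      rw [hI₀, Ideal.span_le]
      rintro _ ⟨i, rfl⟩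
      simp [hε, RingHom.mem_ker]
    exact hle hx
  have hεI : ∀ x ∈ I, ε x = 0 := by
    intro x hx
    have hle : I ≤ RingHom.ker (ε : MvPolynomial (Fin n) R →+* R) := by
      rw [hI, Ideal.span_le]
      rintro _ ⟨i, rfl⟩
      exact hεI₀ _ (hf0 i)
    exact hle hx
  have hfI : ∀ ν, f ν ∈ I := fun ν => Ideal.subset_span ⟨ν, rfl⟩
  -- key vanishing lemma
  have hzero : ∀ c : Fin n → R, (∑ ν, C (c ν) * f ν) ∈ I * I₀ → ∀ ν, c ν = 0 := by
    intro c hc ν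
    rw [mul_comm] at hc
    have hc' : (∑ ν, C (c ν) * f ν) ∈
        I₀ • Submodule.span (MvPolynomial (Fin n) R) (Set.range f) := by
      rwa [Ideal.smul_eq_mul]
    rw [Submodule.mem_ideal_smul_span_iff_exists_sum] at hc'
    obtain ⟨q, hq, hqs⟩ := hc'
    rw [show (q.sum fun i c => c • f i) = ∑ μ, q μ • f μ from
      Finsupp.sum_fintype _ _ fun i => zero_smul _ _] at hqs
    simp only [smul_eq_mul] at hqs
    have hrel : ∑ μ, (C (c μ) - q μ) * f μ = 0 := by
      simp only [sub_mul, Finset.sum_sub_distrib, hqs, sub_self]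
    have hmem := key_lemma R n f hreg n (fun μ => C (c μ) - q μ)
      (fun μ hμ => absurd μ.isLt (by omega)) hrel ν
    have : ε (C (c ν) - q ν) = 0 := hεI _ hmem
    rw [map_sub] at this
    have h1 : ε (C (c ν)) = c ν := by simp [hε]
    have h2 : ε (q ν) = 0 := hεI₀ _ (hq ν)
    rw [h1, h2, sub_zero] at this
    exact this
  constructor
  · intro a b hab
    simp only at hab
    rw [Ideal.Quotient.eq] at hab
    have : (∑ ν, C (a ν - b ν) * f ν) ∈ I * I₀ := by
      have e : ∑ ν, C (a ν - b ν) * f ν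
          = (∑ ν, C (a ν) * f ν) - ∑ ν, C (b ν) * f ν := by
        rw [← Finset.sum_sub_distrib]
        exact Finset.sum_congr rfl fun ν _ => by rw [map_sub]; ring
      rwa [e]
    funext ν
    exact sub_eq_zero.mp (hzero _ this ν)
  · ext x
    constructor
    · rintro ⟨a, rfl⟩
      exact ⟨∑ ν, C (a ν) * f ν,
        Ideal.sum_mem _ fun ν _ => Ideal.mul_mem_left _ _ (hfI ν), rfl⟩
    · rintro ⟨p, hp, rfl⟩
      have hp' : p ∈ Submodule.span (MvPolynomial (Fin n) R) (Set.range f) := hp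
      rw [Submodule.mem_span_range_iff_exists_fun] at hp'
      obtain ⟨cp, hcp⟩ := hp'
      refine ⟨fun ν => ε (cp ν), ?_⟩
      simp only
      rw [Ideal.Quotient.eq]
      have e : (∑ ν, C (ε (cp ν)) * f ν) - p
          = ∑ ν, f ν * (C (ε (cp ν)) - cp ν) := by
        rw [← hcp]
        simp only [smul_eq_mul]
        rw [← Finset.sum_sub_distrib]
        exact Finset.sum_congr rfl fun ν _ => by ring
      rw [e]
      refine Ideal.sum_mem _ fun ν _ => Ideal.mul_mem_mul (hfI ν) ?_
      -- C (ε (cp ν)) - cp ν ∈ I₀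
      have : ∀ p : MvPolynomial (Fin n) R, C (ε p) - p ∈ I₀ := by
        intro p
        rw [hI₀, ← Set.image_univ, mem_ideal_span_X_image]
        intro m hm
        have hm0 : m ≠ 0 := by
          intro h
          apply mem_support_iff.mp hm
          rw [h]
          have : coeff 0 (C (ε p) - p) = ε p - coeff 0 p := by
            simp [coeff_sub]
          rw [this]
          have : ε p = coeff 0 p := by
            simp [hε, constantCoeff_eq]
          rw [this, sub_self]
        obtain ⟨i, hi⟩ := Finsupp.ne_iff.mp hm0
        exact ⟨i, Set.mem_univ i, by simpa using hi⟩
      exact this (cp ν)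
end

section
/- Let k be a field, n ≥ 1, A = k[z]/(z^n), and M an A-module. Then M is a flat A-module if and only if ker(z^{n−i} : M → M) = z^i·M for all i = 0, …, n. -/
open Polynomial TensorProduct

set_option maxHeartbeats 1000000
set_option synthInstance.maxHeartbeats 400000

section aux

variable {k : Type*} [Field k] {n : ℕ}


private lemma z_pow_n_eq_zero : (Ideal.Quotient.mk (Ideal.span {(X : Polynomial k) ^ n}) X) ^ n = 0 := by
  rw [← map_pow, Ideal.Quotient.eq_zero_iff_mem]
  exact Ideal.subset_span rfl

private lemma mul_z_pow_eq_zero_iff {j : ℕ} (hj : j ≤ n) (b : (Polynomial k ⧸ Ideal.span {(X : Polynomial k) ^ n})) :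
    b * (Ideal.Quotient.mk (Ideal.span {(X : Polynomial k) ^ n}) X) ^ j = 0 ↔ b ∈ Ideal.span {(Ideal.Quotient.mk (Ideal.span {(X : Polynomial k) ^ n}) X) ^ (n - j)} := by
  obtain ⟨f, rfl⟩ := Ideal.Quotient.mk_surjective b
  have hXn : (X : Polynomial k) ^ n = X ^ (n - j) * X ^ j := by
    rw [← pow_add, Nat.sub_add_cancel hj]
  constructor
  · intro h
    rw [← map_pow, ← map_mul, Ideal.Quotient.eq_zero_iff_mem, Ideal.mem_span_singleton,
      hXn, mul_dvd_mul_iff_right (pow_ne_zero j (X_ne_zero (R := k)))] at h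
    obtain ⟨c, rfl⟩ := h
    exact Ideal.mem_span_singleton.mpr ⟨Ideal.Quotient.mk _ c, by rw [← map_pow, ← map_mul]⟩
  · intro h
    obtain ⟨c, hc⟩ := Ideal.mem_span_singleton.mp h
    obtain ⟨c', rfl⟩ := Ideal.Quotient.mk_surjective c
    rw [hc, ← map_pow, ← map_pow, ← map_mul, ← map_mul, Ideal.Quotient.eq_zero_iff_mem,
      Ideal.mem_span_singleton, hXn]
    exact mul_dvd_mul (dvd_mul_right _ _) dvd_rfl

private lemma ideal_classification (I : Ideal (Polynomial k ⧸ Ideal.span {(X : Polynomial k) ^ n})) : ∃ j ≤ n, I = Ideal.span {(Ideal.Quotient.mk (Ideal.span {(X : Polynomial k) ^ n}) X) ^ j} := by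
  haveI : IsPrincipalIdealRing (Polynomial k ⧸ Ideal.span {(X : Polynomial k) ^ n}) :=
    IsPrincipalIdealRing.of_surjective (Ideal.Quotient.mk _) Ideal.Quotient.mk_surjective
  obtain ⟨y, rfl⟩ := (IsPrincipalIdealRing.principal I).principal
  obtain ⟨f, rfl⟩ := Ideal.Quotient.mk_surjective y
  by_cases h0 : Ideal.Quotient.mk (Ideal.span {(X : Polynomial k) ^ n}) f = 0
  · refine ⟨n, le_refl n, ?_⟩
    rw [h0, z_pow_n_eq_zero]
  · have hf : f ≠ 0 := by rintro rfl; simp at h0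
    obtain ⟨j, g, hg, rfl⟩ := WfDvdMonoid.max_power_factor hf (Polynomial.irreducible_X)
    have hjn : j ≤ n := by
      by_contra hlt
      exact h0 (Ideal.Quotient.eq_zero_iff_mem.mpr (Ideal.mem_span_singleton.mpr
        (Dvd.dvd.mul_right (pow_dvd_pow X (le_of_not_ge hlt)) g)))
    refine ⟨j, hjn, ?_⟩
    have hunit : IsUnit (Ideal.Quotient.mk (Ideal.span {(X : Polynomial k) ^ n}) g) := by
      have hcop : IsCoprime ((X : Polynomial k) ^ n) g :=
        ((Polynomial.irreducible_X.coprime_iff_not_dvd).mpr hg).pow_left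
      obtain ⟨a, b, hab⟩ := hcop
      refine IsUnit.of_mul_eq_one (Ideal.Quotient.mk _ b) ?_
      have := congrArg (Ideal.Quotient.mk (Ideal.span {(X : Polynomial k) ^ n})) hab
      rw [map_add, map_mul, map_mul, map_one] at this
      have hx : (Ideal.Quotient.mk (Ideal.span {(X : Polynomial k) ^ n})) (X ^ n) = 0 :=
        Ideal.Quotient.eq_zero_iff_mem.mpr (Ideal.subset_span rfl)
      rw [← this, hx]
      ring
    rw [map_mul, map_pow]
    exact Ideal.span_singleton_mul_right_unit hunit _

variable {M : Type*} [AddCommGroup M] [Module (Polynomial k ⧸ Ideal.span {(X : Polynomial k) ^ n}) M]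

private lemma tensor_lemma {j : ℕ} (hj : j ≤ n) (m : M)
    (hzj : (Ideal.Quotient.mk (Ideal.span {(X : Polynomial k) ^ n}) X) ^ j ∈ Ideal.span {(Ideal.Quotient.mk (Ideal.span {(X : Polynomial k) ^ n}) X) ^ j}) :
    ((⟨(Ideal.Quotient.mk (Ideal.span {(X : Polynomial k) ^ n}) X) ^ j, hzj⟩ ⊗ₜ[(Polynomial k ⧸ Ideal.span {(X : Polynomial k) ^ n})] m :
        (Ideal.span {(Ideal.Quotient.mk (Ideal.span {(X : Polynomial k) ^ n}) X) ^ j}) ⊗[(Polynomial k ⧸ Ideal.span {(X : Polynomial k) ^ n})] M) = 0) ↔ ∃ m' : M, m = (Ideal.Quotient.mk (Ideal.span {(X : Polynomial k) ^ n}) X) ^ (n - j) • m' := by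
  set I : Ideal (Polynomial k ⧸ Ideal.span {(X : Polynomial k) ^ n}) := Ideal.span {(Ideal.Quotient.mk (Ideal.span {(X : Polynomial k) ^ n}) X) ^ j} with hI
  set J : Ideal (Polynomial k ⧸ Ideal.span {(X : Polynomial k) ^ n}) := Ideal.span {(Ideal.Quotient.mk (Ideal.span {(X : Polynomial k) ^ n}) X) ^ (n - j)} with hJ
  set ζ : I := ⟨(Ideal.Quotient.mk (Ideal.span {(X : Polynomial k) ^ n}) X) ^ j, hzj⟩ with hζ
  have hπ : ∀ a : (Polynomial k ⧸ Ideal.span {(X : Polynomial k) ^ n}), LinearMap.toSpanSingleton (Polynomial k ⧸ Ideal.span {(X : Polynomial k) ^ n}) I ζ a = a • ζ := fun a => rfl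
  constructor
  · intro h
    have hker : LinearMap.ker (LinearMap.toSpanSingleton (Polynomial k ⧸ Ideal.span {(X : Polynomial k) ^ n}) I ζ) = J := by
      ext a
      rw [LinearMap.mem_ker]
      constructor
      · intro ha
        have : a * (Ideal.Quotient.mk (Ideal.span {(X : Polynomial k) ^ n}) X) ^ j = 0 := by
          have := congrArg (Submodule.subtype I) ha
          simpa [hπ, smul_eq_mul] using this
        exact (mul_z_pow_eq_zero_iff hj a).mp this
      · intro ha
        have : a * (Ideal.Quotient.mk (Ideal.span {(X : Polynomial k) ^ n}) X) ^ j = 0 := (mul_z_pow_eq_zero_iff hj a).mpr ha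
        apply Subtype.ext
        simpa [smul_eq_mul] using this
    have hsurj : Function.Surjective (LinearMap.toSpanSingleton (Polynomial k ⧸ Ideal.span {(X : Polynomial k) ^ n}) I ζ) := by
      rintro ⟨x, hx⟩
      obtain ⟨a, ha⟩ := Ideal.mem_span_singleton'.mp hx
      exact ⟨a, Subtype.ext (by simpa [smul_eq_mul] using ha)⟩
    let e0 : ((Polynomial k ⧸ Ideal.span {(X : Polynomial k) ^ n}) ⧸ J) ≃ₗ[(Polynomial k ⧸ Ideal.span {(X : Polynomial k) ^ n})] ((Polynomial k ⧸ Ideal.span {(X : Polynomial k) ^ n}) ⧸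
        LinearMap.ker (LinearMap.toSpanSingleton (Polynomial k ⧸ Ideal.span {(X : Polynomial k) ^ n}) I ζ)) :=
      Submodule.quotEquivOfEq _ _ hker.symm
    let e1 : ((Polynomial k ⧸ Ideal.span {(X : Polynomial k) ^ n}) ⧸ J) ≃ₗ[(Polynomial k ⧸ Ideal.span {(X : Polynomial k) ^ n})] I :=
      e0.trans ((LinearMap.toSpanSingleton (Polynomial k ⧸ Ideal.span {(X : Polynomial k) ^ n}) I ζ).quotKerEquivOfSurjective hsurj)
    have he1 : e1 (Ideal.Quotient.mk J 1) = ζ := by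
      show ((LinearMap.toSpanSingleton (Polynomial k ⧸ Ideal.span {(X : Polynomial k) ^ n}) I ζ).quotKerEquivOfSurjective hsurj)
        (e0 (Ideal.Quotient.mk J 1)) = ζ
      have h2 : e0 (Ideal.Quotient.mk J 1) = Submodule.Quotient.mk (1 : (Polynomial k ⧸ Ideal.span {(X : Polynomial k) ^ n})) := rfl
      rw [h2]
      show LinearMap.toSpanSingleton (Polynomial k ⧸ Ideal.span {(X : Polynomial k) ^ n}) I ζ 1 = ζ
      simp [hπ]
    let E : I ⊗[(Polynomial k ⧸ Ideal.span {(X : Polynomial k) ^ n})] M ≃ₗ[(Polynomial k ⧸ Ideal.span {(X : Polynomial k) ^ n})] M ⧸ (J • (⊤ : Submodule (Polynomial k ⧸ Ideal.span {(X : Polynomial k) ^ n}) M)) :=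
      (TensorProduct.congr e1.symm (LinearEquiv.refl (Polynomial k ⧸ Ideal.span {(X : Polynomial k) ^ n}) M)).trans
        (TensorProduct.quotTensorEquivQuotSMul M J)
    have hE : E (ζ ⊗ₜ[(Polynomial k ⧸ Ideal.span {(X : Polynomial k) ^ n})] m) = Submodule.Quotient.mk m := by
      show (TensorProduct.quotTensorEquivQuotSMul M J)
        ((TensorProduct.congr e1.symm (LinearEquiv.refl (Polynomial k ⧸ Ideal.span {(X : Polynomial k) ^ n}) M)) (ζ ⊗ₜ[(Polynomial k ⧸ Ideal.span {(X : Polynomial k) ^ n})] m)) =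
          Submodule.Quotient.mk m
      rw [TensorProduct.congr_tmul]
      have hsymm : e1.symm ζ = Ideal.Quotient.mk J 1 := by
        rw [← he1, LinearEquiv.symm_apply_apply]
      rw [hsymm]
      show (TensorProduct.quotTensorEquivQuotSMul M J)
        ((Ideal.Quotient.mk J 1) ⊗ₜ[(Polynomial k ⧸ Ideal.span {(X : Polynomial k) ^ n})] m) = Submodule.Quotient.mk m
      rw [TensorProduct.quotTensorEquivQuotSMul_mk_tmul, one_smul]
    have hmem : m ∈ J • (⊤ : Submodule (Polynomial k ⧸ Ideal.span {(X : Polynomial k) ^ n}) M) := by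
      rw [← Submodule.Quotient.mk_eq_zero, ← hE, h, map_zero]
    refine Submodule.smul_induction_on hmem ?_ ?_
    · intro r hr u _
      obtain ⟨c, hc⟩ := Ideal.mem_span_singleton'.mp (hJ ▸ hr)
      exact ⟨c • u, by rw [← hc, smul_smul, mul_comm, mul_smul]⟩
    · rintro x y ⟨x', rfl⟩ ⟨y', rfl⟩
      exact ⟨x' + y', by rw [smul_add]⟩
  · rintro ⟨m', rfl⟩
    have h1 : ζ ⊗ₜ[(Polynomial k ⧸ Ideal.span {(X : Polynomial k) ^ n})] ((Ideal.Quotient.mk (Ideal.span {(X : Polynomial k) ^ n}) X) ^ (n - j) • m') = (((Ideal.Quotient.mk (Ideal.span {(X : Polynomial k) ^ n}) X) ^ (n - j) • ζ) ⊗ₜ[(Polynomial k ⧸ Ideal.span {(X : Polynomial k) ^ n})] m' :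
        I ⊗[(Polynomial k ⧸ Ideal.span {(X : Polynomial k) ^ n})] M) := by
      exact (TensorProduct.smul_tmul _ _ _).symm
    have h2 : (Ideal.Quotient.mk (Ideal.span {(X : Polynomial k) ^ n}) X) ^ (n - j) • ζ = (0 : I) := by
      apply Subtype.ext
      show (Ideal.Quotient.mk (Ideal.span {(X : Polynomial k) ^ n}) X) ^ (n - j) • ((Ideal.Quotient.mk (Ideal.span {(X : Polynomial k) ^ n}) X) ^ j) = (0 : (Polynomial k ⧸ Ideal.span {(X : Polynomial k) ^ n}))
      rw [smul_eq_mul, ← pow_add, Nat.sub_add_cancel hj, z_pow_n_eq_zero]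
    rw [h1, h2, TensorProduct.zero_tmul]

end aux

/-- Let `k` be a field, `n ≥ 1`, `A = k[z]/(z^n)`, and `M` an `A`-module. Then `M` is a flat
`A`-module if and only if `ker(z^{n−i} : M → M) = z^i·M` for all `i = 0, …, n`. -/
theorem stmt5 (k : Type*) [Field k] (n : ℕ) (hn : 1 ≤ n)
    (M : Type*) [AddCommGroup M]
    [Module (Polynomial k ⧸ Ideal.span {(X : Polynomial k) ^ n}) M] :
    Module.Flat (Polynomial k ⧸ Ideal.span {(X : Polynomial k) ^ n}) M ↔
      ∀ i ≤ n, ∀ m : M,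
        (Ideal.Quotient.mk (Ideal.span {(X : Polynomial k) ^ n}) X) ^ (n - i) • m = 0 ↔
        ∃ m' : M, m =
          (Ideal.Quotient.mk (Ideal.span {(X : Polynomial k) ^ n}) X) ^ i • m' := by
  constructor
  · intro hFlat i hi m
    constructor
    · intro h0
      have hj : n - i ≤ n := Nat.sub_le n i
      have hni : n - (n - i) = i := Nat.sub_sub_self hi
      have hzj : (Ideal.Quotient.mk (Ideal.span {(X : Polynomial k) ^ n}) X) ^ (n - i) ∈ Ideal.span {(Ideal.Quotient.mk (Ideal.span {(X : Polynomial k) ^ n}) X) ^ (n - i)} :=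
        Ideal.mem_span_singleton_self _
      have hinj := (Module.Flat.iff_rTensor_injective' (R := Polynomial k ⧸ Ideal.span {(X : Polynomial k) ^ n}) (M := M)).mp hFlat
        (Ideal.span {(Ideal.Quotient.mk (Ideal.span {(X : Polynomial k) ^ n}) X) ^ (n - i)})
      have ht : (LinearMap.rTensor M (Ideal.span {(Ideal.Quotient.mk (Ideal.span {(X : Polynomial k) ^ n}) X) ^ (n - i)}).subtype)
          ((⟨(Ideal.Quotient.mk (Ideal.span {(X : Polynomial k) ^ n}) X) ^ (n - i), hzj⟩ : Ideal.span {(Ideal.Quotient.mk (Ideal.span {(X : Polynomial k) ^ n}) X) ^ (n - i)}) ⊗ₜ[(Polynomial k ⧸ Ideal.span {(X : Polynomial k) ^ n})] m) = 0 := by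
        rw [LinearMap.rTensor_tmul]
        apply ((TensorProduct.lid (Polynomial k ⧸ Ideal.span {(X : Polynomial k) ^ n}) M).map_eq_zero_iff).mp
        rw [Submodule.subtype_apply, TensorProduct.lid_tmul]
        exact h0
      have ht0 : ((⟨(Ideal.Quotient.mk (Ideal.span {(X : Polynomial k) ^ n}) X) ^ (n - i), hzj⟩ : Ideal.span {(Ideal.Quotient.mk (Ideal.span {(X : Polynomial k) ^ n}) X) ^ (n - i)}) ⊗ₜ[(Polynomial k ⧸ Ideal.span {(X : Polynomial k) ^ n})] m :
          (Ideal.span {(Ideal.Quotient.mk (Ideal.span {(X : Polynomial k) ^ n}) X) ^ (n - i)}) ⊗[(Polynomial k ⧸ Ideal.span {(X : Polynomial k) ^ n})] M) = 0 :=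
        hinj (ht.trans (map_zero _).symm)
      have := (tensor_lemma hj m hzj).mp ht0
      rwa [hni] at this
    · rintro ⟨m', rfl⟩
      rw [smul_smul, ← pow_add, Nat.sub_add_cancel hi, z_pow_n_eq_zero]
      exact zero_smul (Polynomial k ⧸ Ideal.span {(X : Polynomial k) ^ n}) m'
  · intro h
    rw [Module.Flat.iff_rTensor_injective']
    intro I
    obtain ⟨j, hj, rfl⟩ := ideal_classification I
    rw [injective_iff_map_eq_zero]
    intro t ht
    have hzj : (Ideal.Quotient.mk (Ideal.span {(X : Polynomial k) ^ n}) X) ^ j ∈ Ideal.span {(Ideal.Quotient.mk (Ideal.span {(X : Polynomial k) ^ n}) X) ^ j} := Ideal.mem_span_singleton_self _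
    obtain ⟨m, rfl⟩ : ∃ m : M, t = (⟨(Ideal.Quotient.mk (Ideal.span {(X : Polynomial k) ^ n}) X) ^ j, hzj⟩ : Ideal.span {(Ideal.Quotient.mk (Ideal.span {(X : Polynomial k) ^ n}) X) ^ j}) ⊗ₜ[(Polynomial k ⧸ Ideal.span {(X : Polynomial k) ^ n})] m := by
      clear ht
      induction t using TensorProduct.induction_on with
      | zero => exact ⟨0, (TensorProduct.tmul_zero _ _).symm⟩
      | tmul x m =>
        obtain ⟨a, ha⟩ := Ideal.mem_span_singleton'.mp x.2
        refine ⟨a • m, ?_⟩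
        rw [← TensorProduct.smul_tmul]
        congr 1
        exact Subtype.ext (by simpa [smul_eq_mul] using ha.symm)
      | add x y hx hy =>
        obtain ⟨mx, rfl⟩ := hx
        obtain ⟨my, rfl⟩ := hy
        exact ⟨mx + my, (TensorProduct.tmul_add _ _ _).symm⟩
    have h0 : (Ideal.Quotient.mk (Ideal.span {(X : Polynomial k) ^ n}) X) ^ j • m = 0 := by
      rw [LinearMap.rTensor_tmul] at ht
      have := congrArg (TensorProduct.lid (Polynomial k ⧸ Ideal.span {(X : Polynomial k) ^ n}) M) ht
      rwa [Submodule.subtype_apply, TensorProduct.lid_tmul, map_zero] at this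
    have hm := (h (n - j) (Nat.sub_le n j) m).mp (by rwa [Nat.sub_sub_self hj])
    exact (tensor_lemma hj m hzj).mpr hm
end

section
/- Let L be a perfect field of characteristic p, q a power of p, M a finite-dimensional L-vector space, and f : M → M additive with f(λm) = λ^q·f(m) for all λ ∈ L, m ∈ M. Then M decomposes canonically as M = M_ét ⊕ M_nil where M_ét = im(f^{dim M}) is f-stable with f|_{M_ét} bijective, and M_nil = ∪_n ker(f^n) is f-stable with f|_{M_nil} nilpotent. -/
section Aux

variable {L : Type*} [Field L] {p : ℕ} [Fact p.Prime] [CharP L p] [PerfectField L]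
    {k : ℕ} {M : Type*} [AddCommGroup M] [Module L M] [FiniteDimensional L M]
    {f : M → M}

private lemma iter_add (hadd : ∀ m m' : M, f (m + m') = f m + f m') :
    ∀ n x y, f^[n] (x + y) = f^[n] x + f^[n] y := by
  intro n
  induction n with
  | zero => simp
  | succ n ih =>
    intro x y
    simp only [Function.iterate_succ_apply', ih, hadd]

private lemma iter_zero (hadd : ∀ m m' : M, f (m + m') = f m + f m') (n : ℕ) :
    f^[n] (0 : M) = 0 := by
  have h := iter_add hadd n 0 0
  simpa using h.symm

private lemma iter_sub (hadd : ∀ m m' : M, f (m + m') = f m + f m') (n : ℕ) (x y : M) :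
    f^[n] (x - y) = f^[n] x - f^[n] y := by
  have h := iter_add hadd n (x - y) y
  rw [sub_add_cancel] at h
  rw [eq_sub_iff_add_eq, ← h]

private lemma iter_smul (hadd : ∀ m m' : M, f (m + m') = f m + f m')
    (hsmul : ∀ (c : L) (m : M), f (c • m) = c ^ (p ^ k) • f m) :
    ∀ n (c : L) (m : M), f^[n] (c • m) = c ^ (p ^ (k * n)) • f^[n] m := by
  intro n
  induction n with
  | zero => simp
  | succ n ih =>
    intro c m
    rw [Function.iterate_succ_apply', ih, hsmul, Function.iterate_succ_apply', ← pow_mul,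
      ← pow_add]
    ring_nf

variable (hadd : ∀ m m' : M, f (m + m') = f m + f m')
variable (hsmul : ∀ (c : L) (m : M), f (c • m) = c ^ (p ^ k) • f m)

/-- kernel of `f^[n]` as a submodule -/
private def Kk (hadd : ∀ m m' : M, f (m + m') = f m + f m')
    (hsmul : ∀ (c : L) (m : M), f (c • m) = c ^ (p ^ k) • f m) (n : ℕ) : Submodule L M where
  carrier := {m | f^[n] m = 0}
  add_mem' := by
    intro a b ha hb
    simp only [Set.mem_setOf_eq] at *
    rw [iter_add hadd, ha, hb, add_zero]
  zero_mem' := iter_zero hadd n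
  smul_mem' := by
    intro c m hm
    simp only [Set.mem_setOf_eq] at *
    rw [iter_smul hadd hsmul, hm, smul_zero]

/-- range of `f^[n]` as a submodule -/
private def Rr (hadd : ∀ m m' : M, f (m + m') = f m + f m')
    (hsmul : ∀ (c : L) (m : M), f (c • m) = c ^ (p ^ k) • f m) (n : ℕ) : Submodule L M where
  carrier := Set.range f^[n]
  add_mem' := by
    rintro a b ⟨x, rfl⟩ ⟨y, rfl⟩
    exact ⟨x + y, iter_add hadd n x y⟩
  zero_mem' := ⟨0, iter_zero hadd n⟩
  smul_mem' := by
    rintro c m ⟨x, rfl⟩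
    obtain ⟨d, hd⟩ := (iterateFrobeniusEquiv L p (k * n)).surjective c
    refine ⟨d • x, ?_⟩
    rw [iter_smul hadd hsmul, ← iterateFrobeniusEquiv_def, hd]

private lemma mem_Kk {n : ℕ} {x : M} : x ∈ Kk hadd hsmul n ↔ f^[n] x = 0 := Iff.rfl

private lemma mem_Rr {n : ℕ} {x : M} : x ∈ Rr hadd hsmul n ↔ ∃ y, f^[n] y = x := Iff.rfl

private lemma Kk_mono : ∀ m n : ℕ, m ≤ n → Kk hadd hsmul m ≤ Kk hadd hsmul n := by
  intro m n hmn x hx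
  obtain ⟨j, rfl⟩ := Nat.exists_eq_add_of_le hmn
  show f^[m + j] x = 0
  rw [add_comm, Function.iterate_add_apply, (hx : f^[m] x = 0), iter_zero hadd]

private lemma Rr_anti : ∀ n, Rr hadd hsmul (n + 1) ≤ Rr hadd hsmul n := by
  rintro n x ⟨y, rfl⟩
  exact ⟨f y, (Function.iterate_succ_apply f n y).symm⟩

private lemma Kk_stab_step {n : ℕ} (h : Kk hadd hsmul n = Kk hadd hsmul (n + 1)) :
    Kk hadd hsmul (n + 1) = Kk hadd hsmul (n + 2) := by
  refine le_antisymm (Kk_mono hadd hsmul _ _ (by omega)) ?_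
  intro x hx
  have hx' : f^[n + 1] (f x) = 0 := by
    rw [← Function.iterate_succ_apply]; exact hx
  have hmem : f x ∈ Kk hadd hsmul n := h ▸ hx'
  show f^[n + 1] x = 0
  rw [Function.iterate_succ_apply]
  exact hmem

private lemma Rr_stab_step {n : ℕ} (h : Rr hadd hsmul n = Rr hadd hsmul (n + 1)) :
    Rr hadd hsmul (n + 1) = Rr hadd hsmul (n + 2) := by
  refine le_antisymm ?_ (Rr_anti hadd hsmul _)
  rintro x ⟨y, rfl⟩
  have hmem : f^[n] y ∈ Rr hadd hsmul (n + 1) := h ▸ ⟨y, rfl⟩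
  obtain ⟨z, hz⟩ := hmem
  refine ⟨z, ?_⟩
  show f^[n + 2] z = f^[n + 1] y
  rw [Function.iterate_succ_apply' f (n + 1), hz, Function.iterate_succ_apply' f n]

private lemma Kk_stab_succ {n : ℕ} (h : Kk hadd hsmul n = Kk hadd hsmul (n + 1)) :
    ∀ j, Kk hadd hsmul (n + j) = Kk hadd hsmul (n + j + 1) := by
  intro j
  induction j with
  | zero => exact h
  | succ j ih => exact Kk_stab_step hadd hsmul ih

private lemma Kk_stab_all {n : ℕ} (h : Kk hadd hsmul n = Kk hadd hsmul (n + 1)) :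
    ∀ j, Kk hadd hsmul (n + j) = Kk hadd hsmul n := by
  intro j
  induction j with
  | zero => rfl
  | succ j ih => rw [← ih]; exact (Kk_stab_succ hadd hsmul h j).symm

private lemma Rr_stab_succ {n : ℕ} (h : Rr hadd hsmul n = Rr hadd hsmul (n + 1)) :
    ∀ j, Rr hadd hsmul (n + j) = Rr hadd hsmul (n + j + 1) := by
  intro j
  induction j with
  | zero => exact h
  | succ j ih => exact Rr_stab_step hadd hsmul ih

private lemma Rr_stab_all {n : ℕ} (h : Rr hadd hsmul n = Rr hadd hsmul (n + 1)) :
    ∀ j, Rr hadd hsmul (n + j) = Rr hadd hsmul n := by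
  intro j
  induction j with
  | zero => rfl
  | succ j ih => rw [← ih]; exact (Rr_stab_succ hadd hsmul h j).symm

private lemma exists_Kk_stab :
    ∃ n ≤ Module.finrank L M, Kk hadd hsmul n = Kk hadd hsmul (n + 1) := by
  by_contra hc
  push_neg at hc
  have key : ∀ n ≤ Module.finrank L M + 1, n ≤ Module.finrank L (Kk hadd hsmul n) := by
    intro n hn
    induction n with
    | zero => simp
    | succ n ih =>
      have hlt : Kk hadd hsmul n < Kk hadd hsmul (n + 1) :=
        lt_of_le_of_ne (Kk_mono hadd hsmul n (n + 1) (by omega)) (hc n (by omega))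
      have := Submodule.finrank_lt_finrank_of_lt hlt
      have := ih (by omega)
      omega
  have h1 := key (Module.finrank L M + 1) le_rfl
  have h2 := Submodule.finrank_le (Kk hadd hsmul (Module.finrank L M + 1))
  omega

private lemma exists_Rr_stab :
    ∃ n ≤ Module.finrank L M, Rr hadd hsmul n = Rr hadd hsmul (n + 1) := by
  by_contra hc
  push_neg at hc
  have key : ∀ n ≤ Module.finrank L M + 1,
      Module.finrank L (Rr hadd hsmul n) + n ≤ Module.finrank L M := by
    intro n hn
    induction n with
    | zero =>
      have : Rr hadd hsmul 0 = ⊤ := by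
        apply Submodule.eq_top_iff'.2
        intro x; exact ⟨x, rfl⟩
      rw [this]
      simp [finrank_top]
    | succ n ih =>
      have hlt : Rr hadd hsmul (n + 1) < Rr hadd hsmul n :=
        lt_of_le_of_ne (Rr_anti hadd hsmul n) (fun he => hc n (by omega) he.symm)
      have := Submodule.finrank_lt_finrank_of_lt hlt
      have := ih (by omega)
      omega
  have h1 := key (Module.finrank L M + 1) le_rfl
  omega

/-- Kk stabilizes at the dimension -/
private lemma Kk_le_dim (n : ℕ) : Kk hadd hsmul n ≤ Kk hadd hsmul (Module.finrank L M) := by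
  set d := Module.finrank L M
  rcases le_or_gt n d with h | h
  · exact Kk_mono hadd hsmul n d h
  · obtain ⟨m, hm, hstab⟩ := exists_Kk_stab hadd hsmul
    have h1 : Kk hadd hsmul n = Kk hadd hsmul m := by
      have := Kk_stab_all hadd hsmul hstab (n - m)
      rwa [Nat.add_sub_cancel' (by omega)] at this
    have h2 : Kk hadd hsmul d = Kk hadd hsmul m := by
      have := Kk_stab_all hadd hsmul hstab (d - m)
      rwa [Nat.add_sub_cancel' hm] at this
    rw [h1, h2]

private lemma Rr_dim_stab (n : ℕ) (hn : Module.finrank L M ≤ n) :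
    Rr hadd hsmul n = Rr hadd hsmul (Module.finrank L M) := by
  set d := Module.finrank L M
  obtain ⟨m, hm, hstab⟩ := exists_Rr_stab hadd hsmul
  have h1 : Rr hadd hsmul n = Rr hadd hsmul m := by
    have := Rr_stab_all hadd hsmul hstab (n - m)
    rwa [Nat.add_sub_cancel' (by omega)] at this
  have h2 : Rr hadd hsmul d = Rr hadd hsmul m := by
    have := Rr_stab_all hadd hsmul hstab (d - m)
    rwa [Nat.add_sub_cancel' hm] at this
  rw [h1, h2]

end Aux

/-- Let `L` be a perfect field of characteristic `p`, `q = p^k` a power of `p`, `M` a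
finite-dimensional `L`-vector space, and `f : M → M` additive with `f(λ·m) = λ^q·f(m)`.
Then `M` decomposes canonically as `M = M_ét ⊕ M_nil`, where `M_ét = im(f^{dim M})` is
`f`-stable with `f` bijective on it, and `M_nil = ⋃ₙ ker(fⁿ)` is `f`-stable with `f`
nilpotent on it. -/
theorem stmt9 (L : Type*) [Field L] (p : ℕ) [Fact p.Prime] [CharP L p] [PerfectField L]
    (k : ℕ) (M : Type*) [AddCommGroup M] [Module L M] [FiniteDimensional L M]
    (f : M → M) (hadd : ∀ m m' : M, f (m + m') = f m + f m')
    (hsmul : ∀ (c : L) (m : M), f (c • m) = c ^ (p ^ k) • f m) :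
    Set.BijOn f (Set.range (f^[Module.finrank L M])) (Set.range (f^[Module.finrank L M])) ∧
    Set.MapsTo f {m : M | ∃ n : ℕ, f^[n] m = 0} {m : M | ∃ n : ℕ, f^[n] m = 0} ∧
    (∃ N : ℕ, ∀ m ∈ {m : M | ∃ n : ℕ, f^[n] m = 0}, f^[N] m = 0) ∧
    (∀ m : M, ∃ a ∈ Set.range (f^[Module.finrank L M]),
      ∃ b ∈ {m : M | ∃ n : ℕ, f^[n] m = 0}, m = a + b) ∧
    Set.range (f^[Module.finrank L M]) ∩ {m : M | ∃ n : ℕ, f^[n] m = 0} = {0} := by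
  set d := Module.finrank L M with hd
  have hrange : ∀ n, Set.range f^[n] = (Rr hadd hsmul n : Set M) := fun n => rfl
  -- nilpotency bound: anything killed by some power is killed by f^[d]
  have hnil : ∀ m : M, (∃ n : ℕ, f^[n] m = 0) → f^[d] m = 0 := by
    rintro m ⟨n, hn⟩
    exact Kk_le_dim hadd hsmul n hn
  -- range stability
  have hRd : Rr hadd hsmul (d + 1) = Rr hadd hsmul d :=
    Rr_dim_stab hadd hsmul (d + 1) (by omega)
  refine ⟨⟨?_, ?_, ?_⟩, ?_, ⟨d, hnil⟩, ?_, ?_⟩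
  · -- MapsTo on range
    rintro x ⟨y, rfl⟩
    have : f (f^[d] y) ∈ Rr hadd hsmul (d + 1) :=
      ⟨y, (Function.iterate_succ_apply' f d y)⟩
    rw [hRd] at this
    exact this
  · -- InjOn
    rintro x ⟨y, rfl⟩ x' ⟨y', rfl⟩ hxy
    have h1 : f (f^[d] y - f^[d] y') = 0 := by
      have := hadd (f^[d] y - f^[d] y') (f^[d] y')
      rw [sub_add_cancel, hxy] at this
      -- this : f (f^[d] y') = f (f^[d] y - f^[d] y') + f (f^[d] y')
      have := this.symm
      rwa [add_eq_right] at this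
    have h2 : f^[d + 1] (y - y') = 0 := by
      rw [Function.iterate_succ_apply' f d, iter_sub hadd]
      exact h1
    have h3 : (y - y') ∈ Kk hadd hsmul d := Kk_le_dim hadd hsmul (d + 1) h2
    have h4 : f^[d] (y - y') = 0 := h3
    rw [iter_sub hadd] at h4
    have := sub_eq_zero.mp h4
    exact this
  · -- SurjOn
    rintro x ⟨y, rfl⟩
    have : f^[d] y ∈ Rr hadd hsmul (d + 1) := by
      rw [hRd]; exact ⟨y, rfl⟩
    obtain ⟨z, hz⟩ := this
    refine ⟨f^[d] z, ⟨z, rfl⟩, ?_⟩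
    show f (f^[d] z) = f^[d] y
    rw [← Function.iterate_succ_apply' f d]
    exact hz
  · -- MapsTo on nil
    rintro m ⟨n, hn⟩
    refine ⟨n, ?_⟩
    have h0 : f 0 = 0 := by simpa using iter_zero hadd 1
    rw [← Function.iterate_succ_apply, Function.iterate_succ_apply', hn, h0]
  · -- decomposition
    intro m
    have h2d : Rr hadd hsmul (d + d) = Rr hadd hsmul d :=
      Rr_dim_stab hadd hsmul (d + d) (by omega)
    have hm : f^[d] m ∈ Rr hadd hsmul (d + d) := by
      rw [h2d]; exact ⟨m, rfl⟩
    obtain ⟨y, hy⟩ := hm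
    refine ⟨f^[d] y, ⟨y, rfl⟩, m - f^[d] y, ⟨d, ?_⟩, by abel⟩
    rw [iter_sub hadd, ← Function.iterate_add_apply, hy, sub_self]
  · -- intersection
    ext x
    simp only [Set.mem_inter_iff, Set.mem_singleton_iff, Set.mem_setOf_eq, Set.mem_range]
    constructor
    · rintro ⟨⟨y, rfl⟩, n, hn⟩
      have h1 : f^[n + d] y = 0 := by rwa [Function.iterate_add_apply]
      have h2 : y ∈ Kk hadd hsmul d := Kk_le_dim hadd hsmul (n + d) h1
      exact h2
    · rintro rfl
      exact ⟨⟨0, iter_zero hadd d⟩, 0, rfl⟩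
end

section
/- Let k be a field, A = k[z]/(z^n), and M an A-module. Suppose the natural surjections M/zM → zM/z²M → … → z^{n−1}M (induced by multiplication by z) have bijective composite M/zM ≅ z^{n−1}M. Then each of these maps is an isomorphism, the associated graded module satisfies gr^•(A) ⊗_k gr^0(M) ≅ gr^•(M), and M is flat over A. -/
open Polynomial TensorProduct

/-- Auxiliary flatness criterion: if every ideal is generated by a power of a nilpotent `z`,
and the kernel of `z^i` is contained in `z^(n-i) M`, then `M` is flat. -/
private lemma aux_flat (A : Type*) [CommRing A] (M : Type*) [AddCommGroup M] [Module A M]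
    (z : A) (n : ℕ) (hzn : z ^ n = 0)
    (key : ∀ i ≤ n, ∀ m : M, z ^ i • m = 0 → ∃ m', m = z ^ (n - i) • m')
    (hideal : ∀ I : Ideal A, ∃ i ≤ n, I = Ideal.span {z ^ i}) :
    Module.Flat A M := by
  rw [Module.Flat.iff_rTensor_injective']
  intro I
  obtain ⟨i, hi, rfl⟩ := hideal I
  have hmem : z ^ i ∈ Ideal.span {z ^ i} := Ideal.mem_span_singleton_self _
  have hrep : ∀ x : (Ideal.span {z ^ i} : Ideal A) ⊗[A] M,
      ∃ m : M, x = (⟨z ^ i, hmem⟩ : Ideal.span {z ^ i}) ⊗ₜ[A] m := by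
    intro x
    induction x using TensorProduct.induction_on with
    | zero => exact ⟨0, by rw [TensorProduct.tmul_zero]⟩
    | tmul a m =>
      obtain ⟨a, ha⟩ := a
      obtain ⟨r, hr⟩ := Ideal.mem_span_singleton'.mp ha
      refine ⟨r • m, ?_⟩
      rw [← TensorProduct.smul_tmul]
      congr 1
      ext
      simp [← hr, smul_eq_mul]
    | add x y hx hy =>
      obtain ⟨mx, rfl⟩ := hx
      obtain ⟨my, rfl⟩ := hy
      exact ⟨mx + my, by rw [TensorProduct.tmul_add]⟩
  intro x y hxy
  obtain ⟨mx, rfl⟩ := hrep x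
  obtain ⟨my, rfl⟩ := hrep y
  have h0 : z ^ i • (mx - my) = 0 := by
    have := congrArg (TensorProduct.lid A M) hxy
    simp only [LinearMap.rTensor_tmul, Submodule.coe_subtype, TensorProduct.lid_tmul] at this
    rw [smul_sub, this, sub_self]
  obtain ⟨m', hm'⟩ := key i hi (mx - my) h0
  have hzero : (⟨z ^ i, hmem⟩ : Ideal.span {z ^ i}) ⊗ₜ[A] (mx - my) = 0 := by
    rw [hm', ← TensorProduct.smul_tmul]
    have hzz : z ^ (n - i) • (⟨z ^ i, hmem⟩ : Ideal.span {z ^ i}) = 0 := by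
      ext
      show z ^ (n - i) * z ^ i = 0
      rw [← pow_add, Nat.sub_add_cancel hi, hzn]
    rw [hzz, TensorProduct.zero_tmul]
  rw [TensorProduct.tmul_sub, sub_eq_zero] at hzero
  exact hzero

/-- Let `k` be a field, `A = k[z]/(zⁿ)` with `n ≥ 1`, and `M` an `A`-module. Suppose the
composite of the natural surjections `M/zM → zM/z²M → … → z^{n−1}M` is bijective, i.e.
`z^{n−1}·m = 0` implies `m ∈ zM`. Then each of these maps is an isomorphism — multiplication
by `zⁱ` induces an isomorphism `M/zM ≅ zⁱM/z^{i+1}M` for all `i < n`, so that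
`gr^•(A) ⊗_k gr⁰(M) ≅ gr^•(M)` — and `M` is flat over `A`. -/
theorem stmt18 (k : Type*) [Field k] (n : ℕ) (hn : 1 ≤ n) (M : Type*) [AddCommGroup M]
    [Module (Polynomial k ⧸ Ideal.span {(X : Polynomial k) ^ n}) M]
    (hcomp : ∀ m : M,
      (Ideal.Quotient.mk (Ideal.span {(X : Polynomial k) ^ n}) X) ^ (n - 1) • m = 0 →
      ∃ m' : M, m = (Ideal.Quotient.mk (Ideal.span {(X : Polynomial k) ^ n}) X) • m') :
    (∀ i < n, ∀ m : M,
      (∃ m' : M, (Ideal.Quotient.mk (Ideal.span {(X : Polynomial k) ^ n}) X) ^ i • m =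
        (Ideal.Quotient.mk (Ideal.span {(X : Polynomial k) ^ n}) X) ^ (i + 1) • m') →
      ∃ m'' : M, m = (Ideal.Quotient.mk (Ideal.span {(X : Polynomial k) ^ n}) X) • m'') ∧
    Module.Flat (Polynomial k ⧸ Ideal.span {(X : Polynomial k) ^ n}) M := by
  set z : Polynomial k ⧸ Ideal.span {(X : Polynomial k) ^ n} :=
    Ideal.Quotient.mk (Ideal.span {(X : Polynomial k) ^ n}) X with hz
  have hzn : z ^ n = 0 := by
    rw [hz, ← map_pow, Ideal.Quotient.eq_zero_iff_mem]
    exact Ideal.subset_span rfl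
  have key' : ∀ t, t ≤ n → ∀ m : M, z ^ (n - t) • m = 0 → ∃ m', m = z ^ t • m' := by
    intro t
    induction t with
    | zero => intro _ m _; exact ⟨m, by simp⟩
    | succ t ih =>
      intro ht m hm
      have h1 : z ^ (n - 1) • m = 0 := by
        have h : (n - 1) = t + (n - (t + 1)) := by omega
        rw [h, pow_add, mul_smul, hm, smul_zero]
      obtain ⟨m', rfl⟩ := hcomp m h1
      have h2 : z ^ (n - t) • m' = 0 := by
        have h : (n - t) = (n - (t + 1)) + 1 := by omega
        rw [h, pow_succ, mul_smul]
        exact hm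
      obtain ⟨m'', rfl⟩ := ih (by omega) m' h2
      refine ⟨m'', ?_⟩
      rw [pow_succ, mul_comm, mul_smul]
  have key : ∀ i ≤ n, ∀ m : M, z ^ i • m = 0 → ∃ m', m = z ^ (n - i) • m' := by
    intro i hi m hm
    exact key' (n - i) (Nat.sub_le _ _) m (by rwa [Nat.sub_sub_self hi])
  constructor
  · intro i hi m ⟨m', hm'⟩
    apply hcomp
    have h1 : (n - 1) = (n - 1 - i) + i := by omega
    rw [h1, pow_add, mul_smul, hm', ← mul_smul, ← pow_add]
    have h2 : n - 1 - i + (i + 1) = n := by omega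
    rw [h2, hzn]; exact zero_smul (Polynomial k ⧸ Ideal.span {(X : Polynomial k) ^ n}) m'
  · refine aux_flat _ M z n hzn key ?_
    intro I
    have hsurj : Function.Surjective (Ideal.Quotient.mk (Ideal.span {(X : Polynomial k) ^ n})) :=
      Ideal.Quotient.mk_surjective
    set J := I.comap (Ideal.Quotient.mk (Ideal.span {(X : Polynomial k) ^ n})) with hJdef
    obtain ⟨g, hg⟩ := IsPrincipalIdealRing.principal J
    have hXn : (X : Polynomial k) ^ n ∈ J := by
      show Ideal.Quotient.mk _ _ ∈ I
      rw [map_pow, ← hz, hzn]; exact I.zero_mem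
    rw [hg] at hXn
    have hdvd : g ∣ (X : Polynomial k) ^ n := Ideal.mem_span_singleton.mp hXn
    obtain ⟨i, hi, hassoc⟩ := (dvd_prime_pow Polynomial.prime_X n).mp hdvd
    refine ⟨i, hi, ?_⟩
    have hJ : J = Ideal.span {(X : Polynomial k) ^ i} := by
      rw [hg]; exact Ideal.span_singleton_eq_span_singleton.mpr hassoc
    have hmap := Ideal.map_comap_of_surjective _ hsurj I
    rw [← hmap]
    show Ideal.map _ J = _
    rw [hJ, Ideal.map_span]
    simp [hz, ← map_pow]
end
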